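/- Let o : ℝ³ × Ω → ℝ be measurable in ω for each p, and for Δ ∈ [0,1] define the risk contour C^Δ = {p : Prob(o(p,ω) ≤ 0) ≤ Δ}. Define the moment-based set Ĉ^Δ = {p : E[o(p,ω)²] > 0 ∧ E[o(p,ω)] ≥ 0 ∧ (E[o(p,ω)²] − E[o(p,ω)]²)/E[o(p,ω)²] ≤ Δ}. Then Ĉ^Δ ⊆ C^Δ. -/

import Mathlib

open MeasureTheory

/-- The moment-based set `Ĉ^Δ` is an inner approximation of the risk contour `C^Δ`. -/
theorem moment_set_subset_risk_contour
    {Ω : Type*} [MeasurableSpace Ω] (P : Measure Ω) [IsProbabilityMeasure P]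
    (o : (Fin 3 → ℝ) → Ω → ℝ)
    (hmeas : ∀ p, Measurable (o p)) (hL2 : ∀ p, MemLp (o p) 2 P)
    (Δ : ℝ) (hΔ0 : 0 ≤ Δ) (hΔ1 : Δ ≤ 1) :
    {p : Fin 3 → ℝ |
        0 < ∫ ω, (o p ω) ^ 2 ∂P ∧ 0 ≤ ∫ ω, o p ω ∂P ∧
        ((∫ ω, (o p ω) ^ 2 ∂P) - (∫ ω, o p ω ∂P) ^ 2) / (∫ ω, (o p ω) ^ 2 ∂P) ≤ Δ}
      ⊆ {p : Fin 3 → ℝ | (P {ω | o p ω ≤ 0}).toReal ≤ Δ} := by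
  rintro p ⟨hS, hμ, hratio⟩
  set X := o p with hX
  set S := ∫ ω, (X ω) ^ 2 ∂P with hSdef
  set μ := ∫ ω, X ω ∂P with hμdef
  -- the complement event
  have hmeasA : MeasurableSet {ω | X ω ≤ 0} := measurableSet_le (hmeas p) measurable_const
  set A : Set Ω := {ω | X ω ≤ 0} with hA
  -- f = positive part of X, g = indicator of Aᶜ
  set f : Ω → ℝ := fun ω => max (X ω) 0 with hf
  set g : Ω → ℝ := Aᶜ.indicator (fun _ => (1:ℝ)) with hg
  have hfL2 : MemLp f 2 P := (hL2 p).sup (memLp_const 0)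
  have hgL2 : MemLp g 2 P := (memLp_const (1:ℝ)).indicator hmeasA.compl
  have hXint : Integrable X P := (hL2 p).integrable one_le_two
  have hfint : Integrable f P := hfL2.integrable one_le_two
  have hf_nonneg : ∀ ω, 0 ≤ f ω := fun ω => le_max_right _ _
  have hg_nonneg : ∀ ω, 0 ≤ g ω := fun ω => Set.indicator_nonneg (fun _ _ => zero_le_one) ω
  -- pointwise: f * g = f
  have hfg : ∀ ω, f ω * g ω = f ω := by
    intro ω
    by_cases hω : X ω ≤ 0
    · have : f ω = 0 := max_eq_right hω
      simp [this]
    · have hωc : ω ∈ Aᶜ := hω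
      simp [hg, Set.indicator_of_mem hωc]
  -- μ ≤ ∫ f
  have h1 : μ ≤ ∫ ω, f ω ∂P := by
    apply integral_mono hXint hfint
    intro ω; exact le_max_left _ _
  -- Hölder / Cauchy-Schwarz
  have h2eq : ENNReal.ofReal (2:ℝ) = 2 := by norm_num
  have hCS := integral_mul_le_Lp_mul_Lq_of_nonneg (μ := P)
      (⟨by norm_num, by norm_num, by norm_num⟩ : Real.HolderConjugate 2 2)
      (Filter.Eventually.of_forall hf_nonneg) (Filter.Eventually.of_forall hg_nonneg)
      (h2eq ▸ hfL2) (h2eq ▸ hgL2)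
  -- rewrite rpow as npow
  have hfsq : (∫ ω, f ω ^ (2:ℝ) ∂P) = ∫ ω, f ω ^ 2 ∂P := by
    refine integral_congr_ae (Filter.Eventually.of_forall fun ω => ?_)
    show f ω ^ (2:ℝ) = f ω ^ 2
    rw [show ((2:ℝ)) = ((2:ℕ):ℝ) by norm_num, Real.rpow_natCast]
  have hgsq : (∫ ω, g ω ^ (2:ℝ) ∂P) = ∫ ω, g ω ∂P := by
    refine integral_congr_ae (Filter.Eventually.of_forall fun ω => ?_)
    by_cases hω : ω ∈ Aᶜ
    · simp [hg, Set.indicator_of_mem hω]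
    · simp [hg, Set.indicator_of_notMem hω]
  have hfgint : (∫ ω, f ω * g ω ∂P) = ∫ ω, f ω ∂P :=
    integral_congr_ae (Filter.Eventually.of_forall hfg)
  rw [hfgint, hfsq, hgsq] at hCS
  -- ∫ g = P(Aᶜ).toReal
  have hgval : (∫ ω, g ω ∂P) = (P Aᶜ).toReal := by
    rw [hg, integral_indicator_const _ hmeasA.compl]; simp [Measure.real]
  rw [hgval] at hCS
  -- ∫ f² ≤ S
  have hfS : (∫ ω, f ω ^ 2 ∂P) ≤ S := by
    apply integral_mono hfL2.integrable_sq (hL2 p).integrable_sq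
    intro ω
    by_cases hω : X ω ≤ 0
    · simp [hf, max_eq_right hω]; positivity
    · simp [hf, max_eq_left (le_of_lt (not_le.mp hω))]; exact le_rfl
  -- nonnegativity facts
  have hfsq_nonneg : 0 ≤ ∫ ω, f ω ^ 2 ∂P := integral_nonneg fun ω => sq_nonneg _
  have hPAc : (0:ℝ) ≤ (P Aᶜ).toReal := ENNReal.toReal_nonneg
  -- μ² ≤ S * P(Aᶜ)
  have h2 : μ ^ 2 ≤ S * (P Aᶜ).toReal := by
    have hμf : μ ≤ (∫ ω, f ω ^ 2 ∂P) ^ ((1:ℝ)/2) * (P Aᶜ).toReal ^ ((1:ℝ)/2) :=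
      le_trans h1 hCS
    have hrw : (∫ ω, f ω ^ 2 ∂P) ^ ((1:ℝ)/2) = Real.sqrt (∫ ω, f ω ^ 2 ∂P) :=
      (Real.sqrt_eq_rpow _).symm
    have hrw2 : ((P Aᶜ).toReal) ^ ((1:ℝ)/2) = Real.sqrt ((P Aᶜ).toReal) :=
      (Real.sqrt_eq_rpow _).symm
    rw [hrw, hrw2] at hμf
    have := mul_self_le_mul_self hμ hμf
    calc μ ^ 2 = μ * μ := sq μ
      _ ≤ (Real.sqrt (∫ ω, f ω ^ 2 ∂P) * Real.sqrt ((P Aᶜ).toReal)) *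
          (Real.sqrt (∫ ω, f ω ^ 2 ∂P) * Real.sqrt ((P Aᶜ).toReal)) := this
      _ = (∫ ω, f ω ^ 2 ∂P) * (P Aᶜ).toReal := by
          rw [mul_mul_mul_comm, Real.mul_self_sqrt hfsq_nonneg, Real.mul_self_sqrt hPAc]
      _ ≤ S * (P Aᶜ).toReal := by
          exact mul_le_mul_of_nonneg_right hfS hPAc
  -- P(A) = 1 - P(Aᶜ)
  have hPsum : (P A).toReal + (P Aᶜ).toReal = 1 := by
    have := prob_add_prob_compl (μ := P) hmeasA
    rw [← ENNReal.toReal_add (measure_ne_top P A) (measure_ne_top P Aᶜ), this]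
    simp
  -- conclude
  have hkey : (P A).toReal ≤ (S - μ ^ 2) / S := by
    rw [le_div_iff₀ hS]
    nlinarith [hPsum, h2, ENNReal.toReal_nonneg (a := P A)]
  exact le_trans hkey hratio
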